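/- Let r ≥ 1 and let λ, μ ∈ ℝ^r be strictly decreasing tuples. If μ = w(λ) for some even signed permutation w (i.e., λ and μ are conjugate under the Weyl group W(D_r)), then λ ∩ μ = w'(λ) for some even signed permutation w' (i.e., λ and λ ∩ μ are conjugate under W(D_r)). -/

import Mathlib

open Finset

/-- `y` is obtained from `x` by an even signed permutation, i.e. `x` and `y` are
conjugate under the Weyl group `W(D_r) ⊆ W(C_r)` of signed permutations with an
even number of sign changes (`∏ i, ε i = 1`). -/
def IsEvenSignedPermOf {r : ℕ} (x y : Fin r → ℝ) : Prop :=
  ∃ (σ : Equiv.Perm (Fin r)) (ε : Fin r → ℝ),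
    (∀ i, ε i = 1 ∨ ε i = -1) ∧ (∏ i, ε i) = 1 ∧ ∀ i, y i = ε i * x (σ i)

section Aux

variable {r : ℕ}

lemma nested_up {x y : Fin r → ℝ} (hx : StrictAnti x) (hy : StrictAnti y)
    (p : ℝ → Prop) (hp : ∀ {a b : ℝ}, a ≤ b → p a → p b) :
    (∀ i, p (x i) → p (y i)) ∨ (∀ i, p (y i) → p (x i)) := by
  by_contra hc
  push_neg at hc
  obtain ⟨⟨i, hxi, hyi⟩, ⟨j, hyj, hxj⟩⟩ := hc
  have h1 : j < i := hy.lt_iff_gt.mp (lt_of_not_ge fun hle => hyi (hp hle hyj))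
  have h2 : i < j := hx.lt_iff_gt.mp (lt_of_not_ge fun hle => hxj (hp hle hxi))
  omega

lemma nested_down {x y : Fin r → ℝ} (hx : StrictAnti x) (hy : StrictAnti y)
    (p : ℝ → Prop) (hp : ∀ {a b : ℝ}, a ≤ b → p b → p a) :
    (∀ i, p (x i) → p (y i)) ∨ (∀ i, p (y i) → p (x i)) := by
  by_contra hc
  push_neg at hc
  obtain ⟨⟨i, hxi, hyi⟩, ⟨j, hyj, hxj⟩⟩ := hc
  have h1 : i < j := hy.lt_iff_gt.mp (lt_of_not_ge fun hle => hyi (hp hle hyj))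
  have h2 : j < i := hx.lt_iff_gt.mp (lt_of_not_ge fun hle => hxj (hp hle hxi))
  omega

/-- Key counting lemma. -/
lemma count_key {lam mu : Fin r → ℝ} (hlam : StrictAnti lam) (hmu : StrictAnti mu)
    (hcard : ∀ (q : ℝ → Prop) [DecidablePred q],
      (univ.filter fun i => q |mu i|).card = (univ.filter fun i => q |lam i|).card)
    (p : ℝ → Prop) [DecidablePred p] (hp : ∀ {a b : ℝ}, a ≤ b → p a → p b) (hp0 : ¬ p 0) :
    (univ.filter fun i => p |min (lam i) (mu i)|).card
      = (univ.filter fun i => p |lam i|).card := by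
  classical
  have hnomix : ∀ a : ℝ, p a → p (-a) → False := by
    intro a h1 h2
    rcases le_total a 0 with h | h
    · exact hp0 (hp h h1)
    · exact hp0 (hp (by linarith) h2)
  have habs : ∀ a : ℝ, p |a| ↔ p a ∨ p (-a) := by
    intro a
    constructor
    · intro hpa
      rcases abs_choice a with h | h
      · exact Or.inl (h ▸ hpa)
      · exact Or.inr (h ▸ hpa)
    · rintro (h | h)
      · exact hp (le_abs_self a) h
      · exact hp (neg_le_abs a) h
  set Pl := univ.filter fun i => p (lam i) with hPl
  set Pm := univ.filter fun i => p (mu i) with hPm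
  set Ql := univ.filter fun i => p (-(lam i)) with hQl
  set Qm := univ.filter fun i => p (-(mu i)) with hQm
  have hmin : ∀ a b : ℝ, p |min a b| ↔ ((p a ∧ p b) ∨ (p (-a) ∨ p (-b))) := by
    intro a b
    rw [habs]
    rcases le_total a b with hab | hab
    · rw [min_eq_left hab]
      constructor
      · rintro (h | h)
        · exact Or.inl ⟨h, hp hab h⟩
        · exact Or.inr (Or.inl h)
      · rintro (⟨h1, h2⟩ | h | h)
        · exact Or.inl h1
        · exact Or.inr h
        · exact Or.inr (hp (neg_le_neg hab) h)
    · rw [min_eq_right hab]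
      constructor
      · rintro (h | h)
        · exact Or.inl ⟨hp hab h, h⟩
        · exact Or.inr (Or.inr h)
      · rintro (⟨h1, h2⟩ | h | h)
        · exact Or.inl h2
        · exact Or.inr (hp (neg_le_neg hab) h)
        · exact Or.inr h
  have hA : (univ.filter fun i => p |min (lam i) (mu i)|) = (Pl ∩ Pm) ∪ (Ql ∪ Qm) := by
    ext i
    simp only [hPl, hPm, hQl, hQm, mem_filter, mem_union, mem_inter, mem_univ, true_and]
    rw [hmin]
  have hdisj : Disjoint (Pl ∩ Pm) (Ql ∪ Qm) := by
    rw [Finset.disjoint_left]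
    intro i hi hi'
    simp only [hPl, hPm, hQl, hQm, mem_filter, mem_union, mem_inter, mem_univ, true_and] at hi hi'
    rcases hi' with h | h
    · exact hnomix _ hi.1 h
    · exact hnomix _ hi.2 h
  have hsuml : Pl.card + Ql.card = (univ.filter fun i => p |lam i|).card := by
    rw [← Finset.card_union_of_disjoint]
    · congr 1
      ext i
      simp only [hPl, hQl, mem_filter, mem_union, mem_univ, true_and]
      rw [habs]
    · rw [Finset.disjoint_left]
      intro i hi hi'
      simp only [hPl, hQl, mem_filter, mem_univ, true_and] at hi hi'
      exact hnomix _ hi hi'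
  have hsumm : Pm.card + Qm.card = (univ.filter fun i => p |mu i|).card := by
    rw [← Finset.card_union_of_disjoint]
    · congr 1
      ext i
      simp only [hPm, hQm, mem_filter, mem_union, mem_univ, true_and]
      rw [habs]
    · rw [Finset.disjoint_left]
      intro i hi hi'
      simp only [hPm, hQm, mem_filter, mem_univ, true_and] at hi hi'
      exact hnomix _ hi hi'
  have hmulam := hcard p
  rw [hA, Finset.card_union_of_disjoint hdisj]
  have hP : Pl ⊆ Pm ∨ Pm ⊆ Pl := by
    rcases nested_up hlam hmu p hp with h | h
    · left
      intro i hi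
      simp only [hPl, hPm, mem_filter, mem_univ, true_and] at hi ⊢
      exact h i hi
    · right
      intro i hi
      simp only [hPl, hPm, mem_filter, mem_univ, true_and] at hi ⊢
      exact h i hi
  have hQ : Ql ⊆ Qm ∨ Qm ⊆ Ql := by
    rcases nested_down hlam hmu (fun a => p (-a)) (fun {a b} hab h => hp (neg_le_neg hab) h)
        with h | h
    · left
      intro i hi
      simp only [hQl, hQm, mem_filter, mem_univ, true_and] at hi ⊢
      exact h i hi
    · right
      intro i hi
      simp only [hQl, hQm, mem_filter, mem_univ, true_and] at hi ⊢
      exact h i hi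
  rcases hP with hP | hP <;> rcases hQ with hQ | hQ
  · rw [Finset.inter_eq_left.mpr hP, Finset.union_eq_right.mpr hQ]
    have := Finset.card_le_card hP
    have := Finset.card_le_card hQ
    omega
  · rw [Finset.inter_eq_left.mpr hP, Finset.union_eq_left.mpr hQ]
    omega
  · rw [Finset.inter_eq_right.mpr hP, Finset.union_eq_right.mpr hQ]
    omega
  · rw [Finset.inter_eq_right.mpr hP, Finset.union_eq_left.mpr hQ]
    have := Finset.card_le_card hP
    have := Finset.card_le_card hQ
    omega

lemma sign_prod (x : Fin r → ℝ) :
    ∏ i, x i = (-1 : ℝ) ^ ((univ.filter fun i => x i < 0).card) * ∏ i, |x i| := by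
  classical
  have h1 : ∀ i, x i = (if x i < 0 then (-1 : ℝ) else 1) * |x i| := by
    intro i
    rcases lt_trichotomy (x i) 0 with h | h | h
    · rw [if_pos h, abs_of_neg h]; ring
    · rw [if_neg (by rw [h]; exact lt_irrefl 0), h, abs_zero]; ring
    · rw [if_neg (by linarith), abs_of_pos h]; ring
  calc ∏ i, x i = ∏ i, (if x i < 0 then (-1 : ℝ) else 1) * |x i| := by
        exact Finset.prod_congr rfl fun i _ => h1 i
    _ = (∏ i, (if x i < 0 then (-1 : ℝ) else 1)) * ∏ i, |x i| := Finset.prod_mul_distrib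
    _ = _ := by
        congr 1
        rw [Finset.prod_ite, Finset.prod_const, Finset.prod_const, one_pow, mul_one]

end Aux

/-- If `λ, μ ∈ ℝ^r` are strictly decreasing and conjugate under the
Weyl group `W(D_r)` of even signed permutations, then `λ` and the pointwise
minimum `λ ∩ μ` are conjugate under `W(D_r)`. -/
theorem stmt5 (r : ℕ) (hr : 1 ≤ r) (lam mu : Fin r → ℝ)
    (hlam : StrictAnti lam) (hmu : StrictAnti mu)
    (h : IsEvenSignedPermOf lam mu) :
    IsEvenSignedPermOf lam (fun i => min (lam i) (mu i)) := by
  classical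
  obtain ⟨σ₀, ε₀, hε₀, hprod₀, hμ₀⟩ := h
  set nu : Fin r → ℝ := fun i => min (lam i) (mu i) with hnudef
  have hnu : StrictAnti nu := fun i j hij => min_lt_min (hlam hij) (hmu hij)
  have habsmu : ∀ i, |mu i| = |lam (σ₀ i)| := by
    intro i
    rw [hμ₀ i, abs_mul]
    rcases hε₀ i with h | h <;> simp [h]
  -- counting for mu
  have hcard : ∀ (q : ℝ → Prop) [DecidablePred q],
      (univ.filter fun i => q |mu i|).card = (univ.filter fun i => q |lam i|).card := by
    intro q _
    have e : {i // q |mu i|} ≃ {i // q |lam i|} :=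
      Equiv.subtypeEquiv σ₀ fun i => by rw [habsmu i]
    have := Fintype.card_congr e
    simpa [Fintype.card_subtype] using this
  -- fiber counting
  have hfiber : ∀ a : ℝ,
      Fintype.card {i // |nu i| = a} = Fintype.card {i // |lam i| = a} := by
    intro a
    simp only [Fintype.card_subtype]
    rcases lt_trichotomy a 0 with ha | ha | ha
    · rw [Finset.filter_false_of_mem, Finset.filter_false_of_mem]
      · intro i _
        exact fun hc => absurd (hc ▸ abs_nonneg (lam i)) (not_le.mpr ha)
      · intro i _
        exact fun hc => absurd (hc ▸ abs_nonneg (nu i)) (not_le.mpr ha)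
    · subst ha
      have key : (univ.filter fun i => 0 < |min (lam i) (mu i)|).card
          = (univ.filter fun i => 0 < |lam i|).card :=
        count_key hlam hmu hcard (fun t => 0 < t)
          (fun {a b} hab h => lt_of_lt_of_le h hab) (lt_irrefl 0)
      have h1 : ∀ (x : Fin r → ℝ),
          (univ.filter fun i => |x i| = 0).card + (univ.filter fun i => 0 < |x i|).card
            = r := by
        intro x
        have h3 := Finset.card_filter_add_card_filter_not
          (s := (univ : Finset (Fin r))) (p := fun i => 0 < |x i|)
        rw [Finset.card_univ, Fintype.card_fin] at h3
        have h2 : (univ.filter fun i => ¬ 0 < |x i|) = univ.filter fun i => |x i| = 0 := by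
          ext i
          simp only [mem_filter, mem_univ, true_and, not_lt]
          constructor
          · intro hle; exact le_antisymm hle (abs_nonneg _)
          · intro he; rw [he]
        rw [h2] at h3
        omega
      have k1 := h1 nu
      have k2 := h1 lam
      have : (univ.filter fun i => 0 < |nu i|).card
          = (univ.filter fun i => 0 < |lam i|).card := key
      omega
    · have key₁ : (univ.filter fun i => a ≤ |min (lam i) (mu i)|).card
          = (univ.filter fun i => a ≤ |lam i|).card :=
        count_key hlam hmu hcard (fun t => a ≤ t)
          (fun {u v} huv h => h.trans huv) (not_le.mpr ha)
      have key₂ : (univ.filter fun i => a < |min (lam i) (mu i)|).card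
          = (univ.filter fun i => a < |lam i|).card :=
        count_key hlam hmu hcard (fun t => a < t)
          (fun {u v} huv h => h.trans_le huv) (not_lt.mpr ha.le)
      have hsplit : ∀ (x : Fin r → ℝ),
          (univ.filter fun i => |x i| = a).card + (univ.filter fun i => a < |x i|).card
            = (univ.filter fun i => a ≤ |x i|).card := by
        intro x
        rw [← Finset.card_union_of_disjoint]
        · congr 1
          ext i
          simp only [mem_filter, mem_union, mem_univ, true_and]
          constructor
          · rintro (h | h)
            · rw [h]
            · exact h.le
          · intro h
            rcases h.lt_or_eq with h | h
            · exact Or.inr h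
            · exact Or.inl h.symm
        · rw [Finset.disjoint_left]
          intro i hi hi'
          simp only [mem_filter, mem_univ, true_and] at hi hi'
          rw [hi] at hi'
          exact lt_irrefl a hi'
      have k1 := hsplit nu
      have k2 := hsplit lam
      have e1 : (univ.filter fun i => a ≤ |nu i|).card
          = (univ.filter fun i => a ≤ |lam i|).card := key₁
      have e2 : (univ.filter fun i => a < |nu i|).card
          = (univ.filter fun i => a < |lam i|).card := key₂
      omega
  -- the permutation
  set σ : Equiv.Perm (Fin r) :=
    Equiv.ofFiberEquiv (f := fun i => |nu i|) (g := fun i => |lam i|)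
      (fun a => Fintype.equivOfCardEq (hfiber a)) with hσdef
  have habs : ∀ i, |lam (σ i)| = |nu i| := fun i =>
    Equiv.ofFiberEquiv_map (fun a => Fintype.equivOfCardEq (hfiber a)) i
  -- products of absolute values
  have habsprod : ∏ i, |nu i| = ∏ i, |lam i| := by
    rw [← Equiv.prod_comp σ (fun i => |lam i|)]
    exact Finset.prod_congr rfl fun i _ => (habs i).symm
  have habsprodmu : ∏ i, |mu i| = ∏ i, |lam i| := by
    rw [← Equiv.prod_comp σ₀ (fun i => |lam i|)]
    exact Finset.prod_congr rfl fun i _ => habsmu i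
  have hprodmu : ∏ i, mu i = ∏ i, lam i := by
    calc ∏ i, mu i = ∏ i, ε₀ i * lam (σ₀ i) := Finset.prod_congr rfl fun i _ => hμ₀ i
      _ = (∏ i, ε₀ i) * ∏ i, lam (σ₀ i) := Finset.prod_mul_distrib
      _ = ∏ i, lam i := by rw [hprod₀, one_mul, Equiv.prod_comp σ₀ lam]
  -- product equality for nu
  have hprodnu : ∏ i, nu i = ∏ i, lam i := by
    have hNnu : (univ.filter fun i => nu i < 0)
        = (univ.filter fun i => lam i < 0) ∪ (univ.filter fun i => mu i < 0) := by
      ext i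
      simp only [mem_filter, mem_union, mem_univ, true_and, hnudef]
      exact min_lt_iff
    rcases nested_down hlam hmu (fun a => a < 0)
        (fun {u v} huv h => lt_of_le_of_lt huv h) with hN | hN
    · have : (univ.filter fun i => lam i < 0) ⊆ (univ.filter fun i => mu i < 0) := by
        intro i hi
        simp only [mem_filter, mem_univ, true_and] at hi ⊢
        exact hN i hi
      rw [sign_prod nu, hNnu, Finset.union_eq_right.mpr this, habsprod, ← habsprodmu,
        ← sign_prod mu]
      exact hprodmu
    · have : (univ.filter fun i => mu i < 0) ⊆ (univ.filter fun i => lam i < 0) := by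
        intro i hi
        simp only [mem_filter, mem_univ, true_and] at hi ⊢
        exact hN i hi
      rw [sign_prod nu, hNnu, Finset.union_eq_left.mpr this, habsprod, ← sign_prod lam]
  -- now build ε
  by_cases hz : ∃ i0, lam i0 = 0
  · obtain ⟨i0, hi0⟩ := hz
    set i1 : Fin r := σ.symm i0 with hi1def
    have hnu1 : nu i1 = 0 := by
      have := habs i1
      rw [hi1def, Equiv.apply_symm_apply, hi0, abs_zero] at this
      exact abs_eq_zero.mp this.symm
    have hne : ∀ i, i ≠ i1 → nu i ≠ 0 := by
      intro i hi hc
      exact hi (hnu.injective (hc.trans hnu1.symm))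
    have hlamne : ∀ i, i ≠ i1 → lam (σ i) ≠ 0 := by
      intro i hi hc
      exact hne i hi (abs_eq_zero.mp ((habs i).symm.trans (by rw [hc, abs_zero])))
    have hpm : ∀ i, i ≠ i1 → nu i / lam (σ i) = 1 ∨ nu i / lam (σ i) = -1 := by
      intro i hi
      have h' : |nu i| = |lam (σ i)| := (habs i).symm
      rcases abs_eq_abs.mp h' with h | h
      · left; rw [h]; exact div_self (hlamne i hi)
      · right; rw [h, neg_div, div_self (hlamne i hi)]
    set D : ℝ := ∏ j ∈ univ.erase i1, (nu j / lam (σ j)) with hDdef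
    have hDsq : D * D = 1 := by
      rw [hDdef, ← Finset.prod_mul_distrib]
      rw [Finset.prod_eq_one]
      intro j hj
      rcases hpm j (Finset.ne_of_mem_erase hj) with h | h <;> rw [h] <;> norm_num
    have hD : D = 1 ∨ D = -1 := mul_self_eq_one_iff.mp hDsq
    refine ⟨σ, fun i => if i = i1 then D else nu i / lam (σ i), ?_, ?_, ?_⟩
    · intro i
      show (if i = i1 then D else nu i / lam (σ i)) = 1
        ∨ (if i = i1 then D else nu i / lam (σ i)) = -1
      by_cases hi : i = i1
      · rw [if_pos hi]; exact hD
      · rw [if_neg hi]; exact hpm i hi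
    · show (∏ i, if i = i1 then D else nu i / lam (σ i)) = 1
      rw [← Finset.mul_prod_erase univ _ (mem_univ i1), if_pos rfl]
      have hrest : ∏ j ∈ univ.erase i1, (if j = i1 then D else nu j / lam (σ j)) = D := by
        rw [hDdef]
        exact Finset.prod_congr rfl fun j hj => if_neg (Finset.ne_of_mem_erase hj)
      rw [hrest]
      exact hDsq
    · intro i
      show nu i = (if i = i1 then D else nu i / lam (σ i)) * lam (σ i)
      by_cases hi : i = i1
      · subst hi
        rw [if_pos rfl, hnu1, hi1def, Equiv.apply_symm_apply, hi0, mul_zero]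
      · rw [if_neg hi, div_mul_cancel₀ _ (hlamne i hi)]
  · push_neg at hz
    have hlamne : ∀ i, lam (σ i) ≠ 0 := fun i => hz (σ i)
    refine ⟨σ, fun i => nu i / lam (σ i), ?_, ?_, ?_⟩
    · intro i
      show nu i / lam (σ i) = 1 ∨ nu i / lam (σ i) = -1
      have h' : |nu i| = |lam (σ i)| := (habs i).symm
      rcases abs_eq_abs.mp h' with h | h
      · left; rw [h]; exact div_self (hlamne i)
      · right; rw [h, neg_div, div_self (hlamne i)]
    · show (∏ i, nu i / lam (σ i)) = 1
      rw [Finset.prod_div_distrib, Equiv.prod_comp σ lam, hprodnu]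
      exact div_self (Finset.prod_ne_zero_iff.mpr fun i _ => hz i)
    · intro i
      show nu i = nu i / lam (σ i) * lam (σ i)
      rw [div_mul_cancel₀ _ (hlamne i)]
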